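/- Let q be an odd prime power and O ⊆ SL(2,q) a set of size q²-1 with det(X-Y) ≠ 0 for all distinct X, Y ∈ O. If I ∉ O, then O contains exactly q+1 elements X with Tr X = 2 (necessarily all different from I). -/

import Mathlib

open Matrix Finset

section aux
variable {F : Type*} [Field F] [Fintype F] [DecidableEq F]

omit [Fintype F] [DecidableEq F] in
private lemma detsub19 (A B : Matrix (Fin 2) (Fin 2) F) :
    (A - B).det = A.det + B.det - A.trace * B.trace + (A * B).trace := by
  simp [Matrix.det_fin_two, Matrix.trace_fin_two, Matrix.mul_apply, Fin.sum_univ_two]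
  ring

omit [Fintype F] [DecidableEq F] in
private lemma detsub_comm19 (A B : Matrix (Fin 2) (Fin 2) F) : (A - B).det = (B - A).det := by
  simp [Matrix.det_fin_two]; ring

omit [Fintype F] [DecidableEq F] in
private lemma det_one_sub19 (X : Matrix (Fin 2) (Fin 2) F) (h : X.det = 1) :
    (X - 1).det = 2 - X.trace := by
  rw [detsub19, Matrix.det_one, Matrix.trace_one, Matrix.mul_one, h]
  norm_num
  ring

private lemma cardS19 : ((univ : Finset (F × F × F)).filter
    (fun p => p.2.1 * p.2.2 = -p.1 ^ 2)).card = Fintype.card F ^ 2 := by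
  classical
  set S := (univ : Finset (F × F × F)).filter (fun p => p.2.1 * p.2.2 = -p.1 ^ 2) with hS
  have h := Finset.card_eq_sum_card_fiberwise (f := fun p : F × F × F => p.2.1)
    (s := S) (t := univ) (fun x _ => mem_univ _)
  rw [h]
  have hfib : ∀ b : F, (S.filter (fun p => p.2.1 = b)).card = Fintype.card F := by
    intro b
    by_cases hb : b = 0
    · subst hb
      have : S.filter (fun p => p.2.1 = 0) = univ.image (fun c : F => ((0:F), (0:F), c)) := by
        ext ⟨a, b', c⟩
        simp only [hS, mem_filter, mem_univ, true_and, mem_image, Prod.mk.injEq]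
        constructor
        · rintro ⟨h1, h2⟩
          subst h2
          simp only [zero_mul, eq_comm (a := (0:F)), neg_eq_zero] at h1
          have ha : a = 0 := pow_eq_zero_iff (n := 2) (by norm_num) |>.mp h1
          exact ⟨c, ha.symm, rfl, rfl⟩
        · rintro ⟨c', h1, h2, h3⟩
          subst h1; subst h2; subst h3
          simp
      rw [this, Finset.card_image_of_injective _ (fun x y h => by
        simpa using congrArg (fun p : F × F × F => p.2.2) h)]
      simp
    · have : S.filter (fun p => p.2.1 = b) = univ.image (fun a : F => (a, b, -a^2 / b)) := by
        ext ⟨a, b', c⟩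
        simp only [hS, mem_filter, mem_univ, true_and, mem_image, Prod.mk.injEq]
        constructor
        · rintro ⟨h1, h2⟩
          subst h2
          refine ⟨a, rfl, rfl, ?_⟩
          rw [div_eq_iff hb]
          linear_combination -h1
        · rintro ⟨a', h1, h2, h3⟩
          subst h1; subst h2; subst h3
          exact ⟨by field_simp; try ring, rfl⟩
      rw [this, Finset.card_image_of_injective _ (fun x y h => by
        simpa using congrArg (fun p : F × F × F => p.1) h)]
      simp
  simp only [hfib, Finset.sum_const, Finset.card_univ, smul_eq_mul]
  ring

private lemma cardT19 : ((univ : Finset (Matrix (Fin 2) (Fin 2) F)).filter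
    (fun X => X.det = 1 ∧ X.trace = 2)).card = Fintype.card F ^ 2 := by
  classical
  rw [← cardS19 (F := F)]
  apply Finset.card_nbij' (i := fun X => (X 0 0 - 1, X 0 1, X 1 0))
    (j := fun p => !![1 + p.1, p.2.1; p.2.2, 1 - p.1])
  · rintro X hX
    simp only [mem_coe, mem_filter, mem_univ, true_and, Matrix.det_fin_two, Matrix.trace_fin_two] at hX ⊢
    obtain ⟨h1, h2⟩ := hX
    linear_combination -h1 + X 0 0 * h2
  · rintro ⟨a, b, c⟩ h
    simp only [mem_coe, mem_filter, mem_univ, true_and] at h ⊢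
    refine ⟨?_, ?_⟩
    · rw [Matrix.det_fin_two]
      simp
      linear_combination -h
    · rw [Matrix.trace_fin_two]
      simp
      norm_num
  · intro X hX
    simp only [mem_coe, mem_filter, mem_univ, true_and, Matrix.trace_fin_two] at hX
    ext i j
    fin_cases i <;> fin_cases j <;> simp <;> linear_combination -hX.2
  · rintro ⟨a, b, c⟩ h
    simp

private lemma cardS2' : ((univ : Finset ((F × F) × F × F)).filter
    (fun p => p.1.1 * p.2.2 - p.1.2 * p.2.1 = 1)).card
    = (Fintype.card F ^ 2 - 1) * Fintype.card F := by
  classical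
  set S := ((univ : Finset ((F × F) × F × F)).filter
    (fun p => p.1.1 * p.2.2 - p.1.2 * p.2.1 = 1)) with hS
  rw [Finset.card_eq_sum_card_fiberwise (f := fun p : (F × F) × F × F => p.1)
    (t := univ) (fun x _ => mem_univ _)]
  have hfib : ∀ r : F × F, (S.filter (fun p => p.1 = r)).card
      = if r = 0 then 0 else Fintype.card F := by
    rintro ⟨a, b⟩
    by_cases ha : a = 0
    · by_cases hb : b = 0
      · subst ha; subst hb
        simp only [Prod.mk_eq_zero, and_self, if_true, Finset.card_eq_zero]
        ext ⟨⟨a', b'⟩, c, d⟩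
        simp only [hS, mem_filter, mem_univ, true_and, Finset.notMem_empty, iff_false,
          not_and, Prod.mk.injEq]
        rintro h rfl rfl
        simp at h
      · subst ha
        rw [if_neg (by simp [hb])]
        have : S.filter (fun p => p.1 = (0, b)) =
            univ.image (fun d : F => (((0 : F), b), -b⁻¹, d)) := by
          ext ⟨⟨a', b'⟩, c, d⟩
          simp only [hS, mem_filter, mem_univ, true_and, mem_image, Prod.mk.injEq]
          constructor
          · rintro ⟨h1, rfl, rfl⟩
            refine ⟨d, ⟨rfl, rfl⟩, ?_, rfl⟩
            field_simp
            linear_combination h1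
          · rintro ⟨d', ⟨rfl, rfl⟩, rfl, rfl⟩
            refine ⟨by field_simp; ring, rfl, rfl⟩
        rw [this, Finset.card_image_of_injective _ (fun x y h => by
          simpa using congrArg (fun p : (F × F) × F × F => p.2.2) h)]
        simp
    · rw [if_neg (by simp [ha])]
      have : S.filter (fun p => p.1 = (a, b)) =
          univ.image (fun c : F => ((a, b), c, (1 + b * c) / a)) := by
        ext ⟨⟨a', b'⟩, c, d⟩
        simp only [hS, mem_filter, mem_univ, true_and, mem_image, Prod.mk.injEq]
        constructor
        · rintro ⟨h1, rfl, rfl⟩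
          refine ⟨c, ⟨rfl, rfl⟩, rfl, ?_⟩
          rw [div_eq_iff ha]
          linear_combination -h1
        · rintro ⟨c', ⟨rfl, rfl⟩, rfl, rfl⟩
          refine ⟨by field_simp; ring, rfl, rfl⟩
      rw [this, Finset.card_image_of_injective _ (fun x y h => by
        simpa using congrArg (fun p : (F × F) × F × F => p.2.1) h)]
      simp
  simp only [hfib]
  rw [← Finset.add_sum_erase _ _ (mem_univ (0 : F × F))]
  rw [if_pos rfl, zero_add]
  rw [Finset.sum_ite_of_false (by intro r hr; exact (Finset.mem_erase.mp hr).1), Finset.sum_const]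
  rw [Finset.card_erase_of_mem (mem_univ _), Finset.card_univ, Fintype.card_prod]
  rw [smul_eq_mul, ← pow_two]

private lemma cardG19 : ((univ : Finset (Matrix (Fin 2) (Fin 2) F)).filter
    (fun X => X.det = 1)).card = (Fintype.card F ^ 2 - 1) * Fintype.card F := by
  classical
  rw [← cardS2' (F := F)]
  apply Finset.card_nbij' (i := fun X => ((X 0 0, X 0 1), X 1 0, X 1 1))
    (j := fun p => !![p.1.1, p.1.2; p.2.1, p.2.2])
  · intro X hX
    simp only [mem_coe, mem_filter, mem_univ, true_and, Matrix.det_fin_two] at hX ⊢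
    exact hX
  · rintro ⟨⟨a, b⟩, c, d⟩ h
    simp only [mem_coe, mem_filter, mem_univ, true_and] at h ⊢
    rw [Matrix.det_fin_two_of]
    exact h
  · intro X hX
    ext i j
    fin_cases i <;> fin_cases j <;> simp
  · rintro ⟨⟨a, b⟩, c, d⟩ h
    simp

private lemma dir_inj19 {N N' : Matrix (Fin 2) (Fin 2) F} (ht : N.trace = 0) (ht' : N'.trace = 0)
    (hd : N.det = 0) (hd' : N'.det = 0)
    (h : (if N 0 1 = 0 then (none : Option F) else some (N 0 0 / N 0 1)) =
         (if N' 0 1 = 0 then none else some (N' 0 0 / N' 0 1))) :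
    (N - N').det = 0 := by
  rw [Matrix.trace_fin_two] at ht ht'
  rw [Matrix.det_fin_two] at hd hd' ⊢
  simp only [Matrix.sub_apply]
  set a := N 0 0; set b := N 0 1; set c := N 1 0; set d := N 1 1
  set a' := N' 0 0; set b' := N' 0 1; set c' := N' 1 0; set d' := N' 1 1
  have hda : d = -a := by linear_combination ht
  have hda' : d' = -a' := by linear_combination ht'
  rw [hda] at hd; rw [hda'] at hd'
  have hd2 : b * c = -a^2 := by linear_combination -hd
  have hd2' : b' * c' = -a'^2 := by linear_combination -hd'
  rw [hda, hda']
  by_cases hb : b = 0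
  · rw [if_pos hb] at h
    have hb' : b' = 0 := by
      by_contra hb'
      rw [if_neg hb'] at h
      exact Option.noConfusion rfl (heq_of_eq h)
    have ha : a = 0 := by
      have : a * a = 0 := by linear_combination hd2 - c * hb
      exact (mul_self_eq_zero).mp this
    have ha' : a' = 0 := by
      have : a' * a' = 0 := by linear_combination hd2' - c' * hb'
      exact (mul_self_eq_zero).mp this
    rw [ha, ha', hb, hb']
    ring
  · rw [if_neg hb] at h
    have hb' : b' ≠ 0 := by
      intro hb'
      rw [if_pos hb'] at h
      exact Option.noConfusion rfl (heq_of_eq h)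
    rw [if_neg hb'] at h
    have h3 : a * b' = a' * b := (div_eq_div_iff hb hb').mp (Option.some_injective F h)
    have key : b * b' * ((a - a') * (-a - -a') - (b - b') * (c - c')) = 0 := by
      linear_combination (-(b - b') * b') * hd2 + ((b - b') * b) * hd2'
        + (-(a * b' - a' * b)) * h3
    rcases mul_eq_zero.mp key with h0 | h0
    · rcases mul_eq_zero.mp h0 with h0 | h0
      · exact absurd h0 hb
      · exact absurd h0 hb'
    · exact h0

end aux

/-- if O is an affine ovoid of SL(2,q) with I ∉ O, then O contains
exactly q+1 elements of trace 2. -/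
theorem stmt19 (F : Type*) [Field F] [Fintype F] (hodd : Odd (Fintype.card F))
    (O : Set (Matrix (Fin 2) (Fin 2) F)) (hO : ∀ X ∈ O, X.det = 1)
    (hcard : Nat.card O = Fintype.card F ^ 2 - 1)
    (hdiff : ∀ X ∈ O, ∀ Y ∈ O, X ≠ Y → (X - Y).det ≠ 0)
    (hI : (1 : Matrix (Fin 2) (Fin 2) F) ∉ O) :
    Nat.card {X : Matrix (Fin 2) (Fin 2) F // X ∈ O ∧ X.trace = 2} =
      Fintype.card F + 1 := by
  classical
  set q := Fintype.card F with hq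
  have hq1 : 1 ≤ q := Fintype.card_pos
  obtain ⟨k, hk⟩ : ∃ k, q = k + 1 := ⟨q - 1, by omega⟩
  have hfin : O.Finite := Set.toFinite O
  set Of := hfin.toFinset with hOfdef
  have hmem : ∀ X, X ∈ Of ↔ X ∈ O := fun X => hfin.mem_toFinset
  have hOfcard : Of.card = q ^ 2 - 1 := by
    rw [← hcard, Nat.card_coe_set_eq, Set.ncard_eq_toFinset_card O hfin]
  set G := (univ : Finset (Matrix (Fin 2) (Fin 2) F)).filter (fun X => X.det = 1) with hGdef
  have hGmem : ∀ X : Matrix (Fin 2) (Fin 2) F, X ∈ G ↔ X.det = 1 := by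
    intro X; simp [hGdef]
  have hOG : Of ⊆ G := fun X hX => (hGmem X).mpr (hO X ((hmem X).mp hX))
  -- key1 : each point of G has exactly q^2 "collinear" points in G (including itself)
  have key1 : ∀ X ∈ G, (G.filter (fun Y => (X - Y).det = 0)).card = q ^ 2 := by
    intro X hX
    have hdX : X.det = 1 := (hGmem X).mp hX
    have hu : IsUnit X.det := by rw [hdX]; exact isUnit_one
    rw [← cardT19 (F := F)]
    apply Finset.card_nbij' (i := fun Y => Y * X⁻¹) (j := fun W => W * X)
    · intro Y hY
      simp only [hGdef, mem_coe, mem_filter, mem_univ, true_and] at hY ⊢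
      obtain ⟨h1, h2⟩ := hY
      have hdet : (Y * X⁻¹).det = 1 := by
        rw [Matrix.det_mul, Matrix.det_nonsing_inv, h1, hdX]; simp
      refine ⟨hdet, ?_⟩
      have h5 : (Y * X⁻¹ - 1).det = 0 := by
        have he : Y * X⁻¹ - 1 = (Y - X) * X⁻¹ := by
          rw [Matrix.sub_mul, Matrix.mul_nonsing_inv _ hu]
        rw [he, Matrix.det_mul, detsub_comm19, h2, zero_mul]
      rw [det_one_sub19 _ hdet] at h5
      linear_combination -h5
    · intro W hW
      simp only [hGdef, mem_coe, mem_filter, mem_univ, true_and] at hW ⊢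
      obtain ⟨h1, h2⟩ := hW
      refine ⟨by rw [Matrix.det_mul, h1, hdX, one_mul], ?_⟩
      have he : X - W * X = (1 - W) * X := by rw [Matrix.sub_mul, one_mul]
      rw [he, Matrix.det_mul, detsub_comm19, det_one_sub19 _ h1, h2, sub_self, zero_mul]
    · intro Y _
      exact Matrix.nonsing_inv_mul_cancel_right _ _ hu
    · intro W _
      exact Matrix.mul_nonsing_inv_cancel_right _ _ hu
  -- key2 : for Z in O, the only point of O collinear with Z is Z itself
  have key2 : ∀ Z ∈ Of, (Of.filter (fun X => (X - Z).det = 0)).card = 1 := by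
    intro Z hZ
    have : Of.filter (fun X => (X - Z).det = 0) = {Z} := by
      ext X
      simp only [mem_filter, Finset.mem_singleton]
      constructor
      · rintro ⟨h1, h2⟩
        by_contra hne
        exact hdiff X ((hmem X).mp h1) Z ((hmem Z).mp hZ) hne h2
      · rintro rfl
        exact ⟨hZ, by simp⟩
    rw [this, Finset.card_singleton]
  -- key3 : for Z in G outside O, at most q+1 points of O are collinear with Z
  have key3 : ∀ Z ∈ G, Z ∉ Of → (Of.filter (fun X => (X - Z).det = 0)).card ≤ q + 1 := by
    intro Z hZG hZOf
    have hdZ : Z.det = 1 := (hGmem Z).mp hZG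
    have huZ : IsUnit Z.det := by rw [hdZ]; exact isUnit_one
    have hnil : ∀ X ∈ Of.filter (fun X => (X - Z).det = 0),
        ((X - Z) * Z⁻¹).trace = 0 ∧ ((X - Z) * Z⁻¹).det = 0 := by
      intro X hX
      rw [mem_filter] at hX
      obtain ⟨hXO, hXZ⟩ := hX
      have hNd : ((X - Z) * Z⁻¹).det = 0 := by rw [Matrix.det_mul, hXZ, zero_mul]
      have he : X * Z⁻¹ - 1 = (X - Z) * Z⁻¹ := by
        rw [Matrix.sub_mul, Matrix.mul_nonsing_inv _ huZ]
      have hdet : (X * Z⁻¹).det = 1 := by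
        rw [Matrix.det_mul, Matrix.det_nonsing_inv, hO X ((hmem X).mp hXO), hdZ]; simp
      have h5 : (X * Z⁻¹ - 1).det = 0 := by rw [he]; exact hNd
      rw [det_one_sub19 _ hdet] at h5
      constructor
      · rw [← he, Matrix.trace_sub, Matrix.trace_one]
        have : (X * Z⁻¹).trace = 2 := by linear_combination -h5
        rw [this]
        norm_num
      · exact hNd
    have hle : (Of.filter (fun X => (X - Z).det = 0)).card ≤ (univ : Finset (Option F)).card := by
      apply Finset.card_le_card_of_injOn
        (f := fun X => (if ((X - Z) * Z⁻¹) 0 1 = 0 then (none : Option F)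
          else some (((X - Z) * Z⁻¹) 0 0 / ((X - Z) * Z⁻¹) 0 1)))
        (fun _ _ => mem_univ _)
      intro X hX X' hX' hf
      simp only [Finset.mem_coe] at hX hX'
      obtain ⟨hNt, hNd⟩ := hnil X hX
      obtain ⟨hNt', hNd'⟩ := hnil X' hX'
      have hdd := dir_inj19 hNt hNt' hNd hNd' hf
      have hXX : (X - X').det = 0 := by
        have hNN : (X - Z) * Z⁻¹ - (X' - Z) * Z⁻¹ = (X - X') * Z⁻¹ := by
          rw [← Matrix.sub_mul, sub_sub_sub_cancel_right]
        rw [hNN, Matrix.det_mul, Matrix.det_nonsing_inv, hdZ, Ring.inverse_one, mul_one] at hdd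
        exact hdd
      by_contra hne
      exact hdiff X ((hmem X).mp (Finset.mem_filter.mp hX).1)
        X' ((hmem X').mp (Finset.mem_filter.mp hX').1) hne hXX
    simpa using hle
  -- double counting
  have hswap : ∑ X ∈ Of, (G.filter (fun Y => (X - Y).det = 0)).card
      = ∑ Z ∈ G, (Of.filter (fun X => (X - Z).det = 0)).card := by
    simp only [Finset.card_filter]
    rw [Finset.sum_comm]
  have htot : ∑ Z ∈ G, (Of.filter (fun X => (X - Z).det = 0)).card = (q ^ 2 - 1) * q ^ 2 := by
    rw [← hswap, Finset.sum_congr rfl (fun X hX => key1 X (hOG hX)), Finset.sum_const,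
      hOfcard, smul_eq_mul]
  have hofsum : ∑ Z ∈ Of, (Of.filter (fun X => (X - Z).det = 0)).card = q ^ 2 - 1 := by
    rw [Finset.sum_congr rfl key2, Finset.sum_const, hOfcard, smul_eq_mul, mul_one]
  have hsplit : ∑ Z ∈ G \ Of, (Of.filter (fun X => (X - Z).det = 0)).card
      + ∑ Z ∈ Of, (Of.filter (fun X => (X - Z).det = 0)).card
      = ∑ Z ∈ G, (Of.filter (fun X => (X - Z).det = 0)).card := Finset.sum_sdiff hOG
  -- arithmetic
  have hr : q ^ 2 - 1 = k ^ 2 + 2 * k := by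
    have : q ^ 2 = k ^ 2 + 2 * k + 1 := by rw [hk]; ring
    omega
  have hGcard : G.card = (q ^ 2 - 1) * q := cardG19
  have hcsd : (G \ Of).card = (k ^ 2 + 2 * k) * k := by
    have h6 := Finset.card_sdiff_add_card_eq_card hOG
    rw [hOfcard, hGcard, hr, hk] at h6
    have h7 : (k ^ 2 + 2 * k) * (k + 1) = (k ^ 2 + 2 * k) * k + (k ^ 2 + 2 * k) := by ring
    omega
  have hsdsum : ∑ Z ∈ G \ Of, (Of.filter (fun X => (X - Z).det = 0)).card
      = (G \ Of).card * (q + 1) := by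
    rw [hofsum, htot] at hsplit
    rw [hcsd]
    have h8 : (q ^ 2 - 1) * q ^ 2 = (k ^ 2 + 2 * k) * k * (q + 1) + (q ^ 2 - 1) := by
      rw [hr, hk]; ring
    omega
  -- forcing : every point of G outside O is collinear with exactly q+1 points of O
  have hforced : ∀ Z ∈ G \ Of, (Of.filter (fun X => (X - Z).det = 0)).card = q + 1 := by
    have hle : ∀ Z ∈ G \ Of, (Of.filter (fun X => (X - Z).det = 0)).card ≤ q + 1 :=
      fun Z hZ => key3 Z (Finset.mem_sdiff.mp hZ).1 (Finset.mem_sdiff.mp hZ).2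
    have heq : ∑ Z ∈ G \ Of, (Of.filter (fun X => (X - Z).det = 0)).card
        = ∑ _Z ∈ G \ Of, (q + 1) := by
      rw [hsdsum, Finset.sum_const, smul_eq_mul]
    exact fun Z hZ => (Finset.sum_eq_sum_iff_of_le hle).mp heq Z hZ
  -- apply at Z = 1
  have h1G : (1 : Matrix (Fin 2) (Fin 2) F) ∈ G \ Of := by
    rw [Finset.mem_sdiff]
    exact ⟨(hGmem 1).mpr Matrix.det_one, fun h => hI ((hmem 1).mp h)⟩
  have hn1 := hforced 1 h1G
  have hfilt : Of.filter (fun X => (X - 1).det = 0) = Of.filter (fun X => X.trace = 2) := by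
    apply Finset.filter_congr
    intro X hX
    rw [det_one_sub19 X (hO X ((hmem X).mp hX)), sub_eq_zero]
    exact eq_comm
  rw [hfilt] at hn1
  have hconv : Nat.card {X : Matrix (Fin 2) (Fin 2) F // X ∈ O ∧ X.trace = 2}
      = (Of.filter (fun X => X.trace = 2)).card := by
    rw [Nat.card_eq_fintype_card, Fintype.card_subtype]
    congr 1
    ext X
    simp [hmem]
  rw [hconv, hn1]
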